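/- Let p be a prime, c ≥ 1 an integer, and ℓ an integer. Define V(p^n, ℓ) = {(x,y) ∈ ((ℤ/p^nℤ)^c)^2 : x·y ≡ ℓ (mod p^n)}, where x·y is the standard dot product. Then for n ≥ 1, the cardinality of V(p^n, ℓ) satisfies #V(p^n, ℓ) = (p^{cn} − p^{c(n−1)}) · p^{(c−1)n} + p^c · #V(p^{n−1}, ℓ/p), where the second term is interpreted as 0 if p does not divide ℓ (and #V(p^0, m) = 1 for any integer m). -/

import Mathlib

/-- The number of pairs `(x, y)` of vectors in `((ℤ/mℤ)^c)^2` whose dot product is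
the residue of `ℓ` modulo `m`. -/
noncomputable def Vcard (c m : ℕ) (ℓ : ℤ) : ℕ :=
  Nat.card {xy : (Fin c → ZMod m) × (Fin c → ZMod m) //
    (∑ i, xy.1 i * xy.2 i) = (ℓ : ZMod m)}

/-- Fiber-counting for a surjective additive hom. -/
lemma card_fiber_mul {A B : Type*} [AddCommGroup A] [AddCommGroup B]
    (f : A →+ B) (hf : Function.Surjective f) (b : B) :
    Nat.card {a // f a = b} * Nat.card B = Nat.card A := by
  obtain ⟨a₀, ha₀⟩ := hf b
  have e : {a // f a = b} ≃ f.ker :=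
    { toFun := fun a => ⟨a.1 - a₀, by simp [AddMonoidHom.mem_ker, map_sub, a.2, ha₀]⟩
      invFun := fun k => ⟨k.1 + a₀, by
        have := AddMonoidHom.mem_ker.mp k.2
        simp [map_add, this, ha₀]⟩
      left_inv := fun a => by simp
      right_inv := fun k => by simp }
  have e2 : Nat.card (A ⧸ f.ker) = Nat.card B :=
    Nat.card_congr (QuotientAddGroup.quotientKerEquivOfSurjective f hf).toEquiv
  rw [Nat.card_congr e, AddSubgroup.card_eq_card_quotient_mul_card_addSubgroup f.ker, e2,
    mul_comm]

lemma dot_fiber_card {M c : ℕ} [NeZero M] (x : Fin c → ZMod M) (i : Fin c)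
    (hx : IsUnit (x i)) (t : ZMod M) :
    Nat.card {y : Fin c → ZMod M // ∑ j, x j * y j = t} * M = M ^ c := by
  let f : (Fin c → ZMod M) →+ ZMod M :=
    AddMonoidHom.mk' (fun y => ∑ j, x j * y j)
      (by intro a b; simp [mul_add, Finset.sum_add_distrib])
  have hsurj : Function.Surjective f := by
    intro s
    refine ⟨fun j => if j = i then (x i)⁻¹ * s else 0, ?_⟩
    show (∑ j, x j * if j = i then (x i)⁻¹ * s else 0) = s
    simp only [mul_ite, mul_zero, Finset.sum_ite_eq', Finset.mem_univ, if_true]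
    rw [← mul_assoc, ZMod.mul_inv_of_unit _ hx, one_mul]
  have h := card_fiber_mul f hsurj t
  simpa [f, Nat.card_eq_fintype_card, Fintype.card_fun, ZMod.card] using h

section main

variable {p n : ℕ}

/-- multiplication by `p` as map `ZMod p^(n-1) → ZMod p^n`. -/
def iota (p n : ℕ) (b : ZMod (p ^ (n - 1))) : ZMod (p ^ n) :=
  ((p * b.val : ℕ) : ZMod (p ^ n))

lemma pn_eq (hn : 1 ≤ n) : p ^ n = p ^ (n - 1) * p := by
  conv_lhs => rw [← Nat.sub_add_cancel hn, pow_succ]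

lemma iota_not_isUnit (hp : p.Prime) (hn : 1 ≤ n) (b : ZMod (p ^ (n - 1))) :
    ¬ IsUnit (iota p n b) := by
  rw [iota, ZMod.isUnit_iff_coprime]
  intro hco
  have h1 : p ∣ Nat.gcd (p * b.val) (p ^ n) :=
    Nat.dvd_gcd (Dvd.intro _ rfl) (dvd_pow_self p (by omega))
  rw [Nat.Coprime] at hco
  rw [hco] at h1
  exact Nat.Prime.one_lt hp |>.ne' (Nat.le_antisymm (Nat.le_of_dvd one_pos h1) hp.one_lt.le ▸ rfl)

lemma iota_injective (hp : p.Prime) (hn : 1 ≤ n) :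
    Function.Injective (iota p n) := by
  haveI : NeZero (p ^ (n - 1)) := ⟨pow_ne_zero _ hp.pos.ne'⟩
  intro b₁ b₂ h
  rw [iota, iota, ZMod.natCast_eq_natCast_iff] at h
  have hlt : ∀ b : ZMod (p ^ (n - 1)), p * b.val < p ^ n := by
    intro b
    rw [pn_eq hn]
    calc p * b.val = b.val * p := mul_comm _ _
    _ < p ^ (n - 1) * p := by
        exact (Nat.mul_lt_mul_right hp.pos).mpr (ZMod.val_lt b)
  have := Nat.ModEq.eq_of_lt_of_lt h (hlt b₁) (hlt b₂)
  exact ZMod.val_injective _ (Nat.eq_of_mul_eq_mul_left hp.pos this)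

lemma iota_surj (hp : p.Prime) (hn : 1 ≤ n) (a : ZMod (p ^ n)) (ha : ¬ IsUnit a) :
    ∃ b, iota p n b = a := by
  haveI : NeZero (p ^ n) := ⟨pow_ne_zero _ hp.pos.ne'⟩
  haveI : NeZero (p ^ (n - 1)) := ⟨pow_ne_zero _ hp.pos.ne'⟩
  have hav : (a.val : ZMod (p ^ n)) = a := ZMod.natCast_rightInverse a
  have hdvd : p ∣ a.val := by
    by_contra hnd
    apply ha
    rw [← hav, ZMod.isUnit_iff_coprime]
    exact Nat.Coprime.pow_right _ ((Nat.Prime.coprime_iff_not_dvd hp).mpr hnd).symm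
  refine ⟨((a.val / p : ℕ) : ZMod (p ^ (n - 1))), ?_⟩
  have hlt : a.val / p < p ^ (n - 1) := by
    apply Nat.div_lt_of_lt_mul
    rw [mul_comm, ← pn_eq hn]
    exact ZMod.val_lt a
  rw [iota, ZMod.val_cast_of_lt hlt, Nat.mul_div_cancel' hdvd, hav]

noncomputable def nuEquiv (hp : p.Prime) (hn : 1 ≤ n) :
    ZMod (p ^ (n - 1)) ≃ {a : ZMod (p ^ n) // ¬ IsUnit a} :=
  Equiv.ofBijective (fun b => ⟨iota p n b, iota_not_isUnit hp hn b⟩)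
    ⟨fun a b hab => iota_injective hp hn (by simpa using congrArg Subtype.val hab),
     fun a => by obtain ⟨b, hb⟩ := iota_surj hp hn a.1 a.2; exact ⟨b, Subtype.ext hb⟩⟩

lemma cond_iff (hp : p.Prime) (hn : 1 ≤ n) {c : ℕ} (ℓ : ℤ)
    (x' : Fin c → ZMod (p ^ (n - 1))) (y : Fin c → ZMod (p ^ n)) :
    (∑ i, iota p n (x' i) * y i = (ℓ : ZMod (p ^ n))) ↔
      ((p : ℤ) ∣ ℓ ∧
        (∑ i, x' i * (((y i).val : ℕ) : ZMod (p ^ (n - 1)))) =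
          ((ℓ / p : ℤ) : ZMod (p ^ (n - 1)))) := by
  haveI : NeZero (p ^ n) := ⟨pow_ne_zero _ hp.pos.ne'⟩
  haveI : NeZero (p ^ (n - 1)) := ⟨pow_ne_zero _ hp.pos.ne'⟩
  have hp0 : (p : ℤ) ≠ 0 := by exact_mod_cast hp.pos.ne'
  set S : ℤ := ∑ i, ((x' i).val : ℤ) * ((y i).val : ℤ) with hS
  have hcast1 : ((p * S : ℤ) : ZMod (p ^ n)) = ∑ i, iota p n (x' i) * y i := by
    rw [hS]
    push_cast [iota, Finset.mul_sum]
    refine Finset.sum_congr rfl fun i _ => ?_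
    rw [ZMod.natCast_rightInverse (y i), mul_assoc]
  have step2 : (∑ i, iota p n (x' i) * y i = (ℓ : ZMod (p ^ n))) ↔
      ((p : ℤ) ^ n ∣ p * S - ℓ) := by
    rw [← hcast1, ← sub_eq_zero, ← Int.cast_sub, ZMod.intCast_zmod_eq_zero_iff_dvd]
    push_cast
    rfl
  have hcast2 : ((S : ℤ) : ZMod (p ^ (n - 1))) =
      ∑ i, x' i * (((y i).val : ℕ) : ZMod (p ^ (n - 1))) := by
    rw [hS]
    push_cast
    exact Finset.sum_congr rfl fun i _ => by rw [ZMod.natCast_rightInverse (x' i)]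
  have step4 : ∀ t : ℤ, ((p : ℤ) ^ (n - 1) ∣ S - t) ↔
      ((∑ i, x' i * (((y i).val : ℕ) : ZMod (p ^ (n - 1)))) = (t : ZMod (p ^ (n - 1)))) := by
    intro t
    rw [← hcast2, ← sub_eq_zero, ← Int.cast_sub, ZMod.intCast_zmod_eq_zero_iff_dvd]
    push_cast
    rfl
  have hpow : ((p : ℤ) ^ n) = (p : ℤ) * (p : ℤ) ^ (n - 1) := by
    rw_mod_cast [pn_eq hn]; push_cast; ring
  rw [step2]
  constructor
  · intro hdvd
    have hpl : (p : ℤ) ∣ ℓ := by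
      have h2 : (p : ℤ) ∣ p * S - ℓ := ((dvd_pow_self (p : ℤ) (by omega : n ≠ 0)).trans hdvd)
      have h3 : (p : ℤ) ∣ p * S := Dvd.intro _ rfl
      have h4 : ℓ = p * S - (p * S - ℓ) := by ring
      rw [h4]; exact dvd_sub h3 h2
    refine ⟨hpl, ?_⟩
    obtain ⟨ℓ', hℓ'⟩ := hpl
    have hdiv : ℓ / p = ℓ' := by rw [hℓ']; exact Int.mul_ediv_cancel_left _ hp0
    rw [hℓ', hpow, ← mul_sub] at hdvd
    rw [← step4, hdiv]
    exact (mul_dvd_mul_iff_left hp0).mp hdvd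
  · rintro ⟨hpl, hsum⟩
    rw [← step4] at hsum
    obtain ⟨ℓ', hℓ'⟩ := hpl
    have hdiv : ℓ / p = ℓ' := by rw [hℓ']; exact Int.mul_ediv_cancel_left _ hp0
    rw [hℓ', hpow, ← mul_sub]
    rw [hdiv] at hsum
    exact mul_dvd_mul_left _ hsum

/-- reduction mod `p^(n-1)`. -/
def pi' (p n : ℕ) (a : ZMod (p ^ n)) : ZMod (p ^ (n - 1)) :=
  ((a.val : ℕ) : ZMod (p ^ (n - 1)))

lemma pi'_eq_castHom (hp : p.Prime) (hn : 1 ≤ n) (a : ZMod (p ^ n)) :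
    pi' p n a = ZMod.castHom (pow_dvd_pow p (Nat.sub_le n 1)) (ZMod (p ^ (n - 1))) a := by
  haveI : NeZero (p ^ n) := ⟨pow_ne_zero _ hp.pos.ne'⟩
  rw [pi', ZMod.natCast_val, ZMod.castHom_apply]

lemma pi'_add (hp : p.Prime) (hn : 1 ≤ n) (a b : ZMod (p ^ n)) :
    pi' p n (a + b) = pi' p n a + pi' p n b := by
  simp only [pi'_eq_castHom hp hn, map_add]

lemma pi'_section (hp : p.Prime) (hn : 1 ≤ n) (b : ZMod (p ^ (n - 1))) :
    pi' p n ((b.val : ℕ) : ZMod (p ^ n)) = b := by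
  haveI : NeZero (p ^ n) := ⟨pow_ne_zero _ hp.pos.ne'⟩
  haveI : NeZero (p ^ (n - 1)) := ⟨pow_ne_zero _ hp.pos.ne'⟩
  have hlt : b.val < p ^ n :=
    lt_of_lt_of_le (ZMod.val_lt b) (Nat.pow_le_pow_right hp.pos (Nat.sub_le n 1))
  rw [pi', ZMod.val_cast_of_lt hlt]
  exact ZMod.natCast_rightInverse b

/-- splitting `ZMod p^n` into residue mod `p^(n-1)` and "kernel part". -/
noncomputable def splitEquiv (hp : p.Prime) (hn : 1 ≤ n) :
    ZMod (p ^ n) ≃ ZMod (p ^ (n - 1)) × {k : ZMod (p ^ n) // pi' p n k = 0} where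
  toFun a := (pi' p n a, ⟨a - (((pi' p n a).val : ℕ) : ZMod (p ^ n)), by
    have h1 : pi' p n (a - (((pi' p n a).val : ℕ) : ZMod (p ^ n))
        + (((pi' p n a).val : ℕ) : ZMod (p ^ n))) = pi' p n a := by
      rw [sub_add_cancel]
    rw [pi'_add hp hn, pi'_section hp hn] at h1
    exact add_right_cancel (h1.trans (zero_add _).symm)⟩)
  invFun bk := ((bk.1.val : ℕ) : ZMod (p ^ n)) + bk.2.1
  left_inv a := by simp
  right_inv bk := by
    obtain ⟨b, k, hk⟩ := bk
    have hpi : pi' p n (((b.val : ℕ) : ZMod (p ^ n)) + k) = b := by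
      rw [pi'_add hp hn, pi'_section hp hn, hk, add_zero]
    refine Prod.ext hpi ?_
    apply Subtype.ext
    simp only [hpi]
    abel

lemma card_K (hp : p.Prime) (hn : 1 ≤ n) :
    Nat.card {k : ZMod (p ^ n) // pi' p n k = 0} = p := by
  haveI : NeZero (p ^ n) := ⟨pow_ne_zero _ hp.pos.ne'⟩
  haveI : NeZero (p ^ (n - 1)) := ⟨pow_ne_zero _ hp.pos.ne'⟩
  let f : ZMod (p ^ n) →+ ZMod (p ^ (n - 1)) :=
    AddMonoidHom.mk' (pi' p n) (pi'_add hp hn)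
  have hsurj : Function.Surjective f := fun b => ⟨((b.val : ℕ) : ZMod (p ^ n)), pi'_section hp hn b⟩
  have h := card_fiber_mul f hsurj 0
  have he : Nat.card {a // f a = 0} = Nat.card {k : ZMod (p ^ n) // pi' p n k = 0} :=
    Nat.card_congr (Equiv.subtypeEquivRight fun a => by simp [f])
  rw [he] at h
  simp only [Nat.card_eq_fintype_card, ZMod.card] at h ⊢
  have hpn : p ^ n = p * p ^ (n - 1) := by rw [pn_eq hn]; ring
  exact Nat.eq_of_mul_eq_mul_right (Nat.pos_of_ne_zero (pow_ne_zero _ hp.pos.ne'))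
    (h.trans hpn)

/-- The key product decomposition for the divisible part. -/
noncomputable def divisibleEquiv (hp : p.Prime) (hn : 1 ≤ n) (c : ℕ) (t : ZMod (p ^ (n - 1))) :
    {q : (Fin c → ZMod (p ^ (n - 1))) × (Fin c → ZMod (p ^ n)) //
        ∑ i, q.1 i * pi' p n (q.2 i) = t} ≃
      ({z : (Fin c → ZMod (p ^ (n - 1))) × (Fin c → ZMod (p ^ (n - 1))) //
        ∑ i, z.1 i * z.2 i = t} × (Fin c → {k : ZMod (p ^ n) // pi' p n k = 0})) where
  toFun q := (⟨(q.1.1, fun i => pi' p n (q.1.2 i)), q.2⟩,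
    fun i => ((splitEquiv hp hn) (q.1.2 i)).2)
  invFun zk := ⟨(zk.1.1.1, fun i => (splitEquiv hp hn).symm (zk.1.1.2 i, zk.2 i)), by
    have hfst : ∀ i, pi' p n ((splitEquiv hp hn).symm (zk.1.1.2 i, zk.2 i)) = zk.1.1.2 i := by
      intro i
      have := (splitEquiv hp hn).apply_symm_apply (zk.1.1.2 i, zk.2 i)
      exact congrArg Prod.fst this
    simp only [hfst]
    exact zk.1.2⟩
  left_inv q := by
    apply Subtype.ext
    refine Prod.ext rfl ?_
    funext i
    have : (splitEquiv hp hn) (q.1.2 i) = (pi' p n (q.1.2 i), ((splitEquiv hp hn) (q.1.2 i)).2) :=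
      Prod.ext rfl rfl
    calc (splitEquiv hp hn).symm (pi' p n (q.1.2 i), ((splitEquiv hp hn) (q.1.2 i)).2)
        = (splitEquiv hp hn).symm ((splitEquiv hp hn) (q.1.2 i)) := by rw [← this]
      _ = q.1.2 i := (splitEquiv hp hn).symm_apply_apply _
  right_inv zk := by
    obtain ⟨⟨⟨x, w⟩, hz⟩, k⟩ := zk
    have happ : ∀ i, (splitEquiv hp hn) ((splitEquiv hp hn).symm (w i, k i)) = (w i, k i) :=
      fun i => (splitEquiv hp hn).apply_symm_apply _
    refine Prod.ext (Subtype.ext (Prod.ext rfl ?_)) ?_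
    · funext i
      exact congrArg Prod.fst (happ i)
    · funext i
      exact congrArg Prod.snd (happ i)

end main

theorem stmt0 (p c n : ℕ) (hp : p.Prime) (hc : 1 ≤ c) (hn : 1 ≤ n) (ℓ : ℤ) :
    Vcard c (p ^ n) ℓ =
      (p ^ (c * n) - p ^ (c * (n - 1))) * p ^ ((c - 1) * n) +
        p ^ c * (if (p : ℤ) ∣ ℓ then Vcard c (p ^ (n - 1)) (ℓ / p) else 0) := by
  classical
  haveI : NeZero (p ^ n) := ⟨pow_ne_zero _ hp.pos.ne'⟩
  haveI : NeZero (p ^ (n - 1)) := ⟨pow_ne_zero _ hp.pos.ne'⟩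
  set P : (Fin c → ZMod (p ^ n)) → Prop := fun x => ∃ i, IsUnit (x i) with hP
  -- Step A : splitting
  have hsplit : Vcard c (p ^ n) ℓ =
      Nat.card {xy : (Fin c → ZMod (p ^ n)) × (Fin c → ZMod (p ^ n)) //
        (∑ i, xy.1 i * xy.2 i) = (ℓ : ZMod (p ^ n)) ∧ P xy.1} +
      Nat.card {xy : (Fin c → ZMod (p ^ n)) × (Fin c → ZMod (p ^ n)) //
        (∑ i, xy.1 i * xy.2 i) = (ℓ : ZMod (p ^ n)) ∧ ¬ P xy.1} := by
    rw [Vcard,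
      ← Nat.card_congr (Equiv.sumCompl
        (fun s : {xy : (Fin c → ZMod (p ^ n)) × (Fin c → ZMod (p ^ n)) //
          (∑ i, xy.1 i * xy.2 i) = (ℓ : ZMod (p ^ n))} => P s.1.1)),
      Nat.card_sum]
    exact congrArg₂ (· + ·)
      (Nat.card_congr (Equiv.subtypeSubtypeEquivSubtypeInter
        (fun xy : (Fin c → ZMod (p ^ n)) × (Fin c → ZMod (p ^ n)) =>
          (∑ i, xy.1 i * xy.2 i) = (ℓ : ZMod (p ^ n))) (fun xy => P xy.1)))
      (Nat.card_congr (Equiv.subtypeSubtypeEquivSubtypeInter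
        (fun xy : (Fin c → ZMod (p ^ n)) × (Fin c → ZMod (p ^ n)) =>
          (∑ i, xy.1 i * xy.2 i) = (ℓ : ZMod (p ^ n))) (fun xy => ¬ P xy.1)))
  -- Step B : the part where some coordinate of x is a unit
  have hcard1 : Nat.card {xy : (Fin c → ZMod (p ^ n)) × (Fin c → ZMod (p ^ n)) //
      (∑ i, xy.1 i * xy.2 i) = (ℓ : ZMod (p ^ n)) ∧ P xy.1}
      = ((p ^ n) ^ c - (p ^ (n - 1)) ^ c) * (p ^ n) ^ (c - 1) := by
    have e1 : {xy : (Fin c → ZMod (p ^ n)) × (Fin c → ZMod (p ^ n)) //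
        (∑ i, xy.1 i * xy.2 i) = (ℓ : ZMod (p ^ n)) ∧ P xy.1} ≃
        Σ x : (Fin c → ZMod (p ^ n)), {y : Fin c → ZMod (p ^ n) // P x ∧ (∑ i, x i * y i) = (ℓ : ZMod (p ^ n))} :=
      (Equiv.subtypeEquivRight (fun xy => and_comm)).trans
        (Equiv.subtypeProdEquivSigmaSubtype
          (fun (x y : Fin c → ZMod (p ^ n)) => P x ∧ (∑ i, x i * y i) = (ℓ : ZMod (p ^ n))))
    rw [Nat.card_congr e1, Nat.card_eq_fintype_card, Fintype.card_sigma]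
    have hy : ∀ x : Fin c → ZMod (p ^ n),
        Fintype.card {y : Fin c → ZMod (p ^ n) // P x ∧ (∑ i, x i * y i) = (ℓ : ZMod (p ^ n))}
          = if P x then (p ^ n) ^ (c - 1) else 0 := by
      intro x
      by_cases hPx : P x
      · rw [if_pos hPx, ← Nat.card_eq_fintype_card,
          Nat.card_congr (Equiv.subtypeEquivRight (fun y => and_iff_right hPx))]
        obtain ⟨i, hi⟩ := hPx
        have h2 := dot_fiber_card x i hi ((ℓ : ZMod (p ^ n)))
        have h3 : (p ^ n) ^ c = (p ^ n) ^ (c - 1) * p ^ n := by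
          conv_lhs => rw [← Nat.sub_add_cancel hc, pow_succ]
        exact Nat.eq_of_mul_eq_mul_right (Nat.pos_of_ne_zero (NeZero.ne _)) (h2.trans h3)
      · rw [if_neg hPx]
        exact Fintype.card_eq_zero_iff.mpr ⟨fun y => hPx y.2.1⟩
    calc ∑ x : Fin c → ZMod (p ^ n),
          Fintype.card {y : Fin c → ZMod (p ^ n) // P x ∧ (∑ i, x i * y i) = (ℓ : ZMod (p ^ n))}
        = ∑ x : Fin c → ZMod (p ^ n), if P x then (p ^ n) ^ (c - 1) else 0 :=
          Finset.sum_congr rfl (fun x _ => hy x)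
      _ = ∑ _x ∈ Finset.univ.filter P, (p ^ n) ^ (c - 1) := (Finset.sum_filter _ _).symm
      _ = (Finset.univ.filter P).card * (p ^ n) ^ (c - 1) := by
          rw [Finset.sum_const, smul_eq_mul]
      _ = ((p ^ n) ^ c - (p ^ (n - 1)) ^ c) * (p ^ n) ^ (c - 1) := by
          rw [← Fintype.card_subtype]
          congr 1
          have e2 : {x : Fin c → ZMod (p ^ n) // ∀ i, ¬ IsUnit (x i)} ≃
              (Fin c → ZMod (p ^ (n - 1))) :=
            (Equiv.subtypePiEquivPi).trans (Equiv.piCongrRight fun _ => (nuEquiv hp hn).symm)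
          have hns : Fintype.card {x : Fin c → ZMod (p ^ n) // ∀ i, ¬ IsUnit (x i)}
              = (p ^ (n - 1)) ^ c := by
            rw [← Nat.card_eq_fintype_card, Nat.card_congr e2, Nat.card_eq_fintype_card,
              Fintype.card_fun, ZMod.card, Fintype.card_fin]
          have e3 : {x : Fin c → ZMod (p ^ n) // P x} ≃
              {x : Fin c → ZMod (p ^ n) // ¬ ∀ i, ¬ IsUnit (x i)} :=
            Equiv.subtypeEquivRight (fun x => not_forall_not.symm)
          rw [← Nat.card_eq_fintype_card, Nat.card_congr e3, Nat.card_eq_fintype_card,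
            Fintype.card_subtype_compl, hns, Fintype.card_fun, ZMod.card, Fintype.card_fin]
  -- Step C : the part where all coordinates of x are non-units
  have hcard2 : Nat.card {xy : (Fin c → ZMod (p ^ n)) × (Fin c → ZMod (p ^ n)) //
      (∑ i, xy.1 i * xy.2 i) = (ℓ : ZMod (p ^ n)) ∧ ¬ P xy.1}
      = (if (p : ℤ) ∣ ℓ then Vcard c (p ^ (n - 1)) (ℓ / p) * p ^ c else 0) := by
    let Gf : {q : (Fin c → ZMod (p ^ (n - 1))) × (Fin c → ZMod (p ^ n)) //
          ∑ i, iota p n (q.1 i) * q.2 i = (ℓ : ZMod (p ^ n))} →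
        {xy : (Fin c → ZMod (p ^ n)) × (Fin c → ZMod (p ^ n)) //
          (∑ i, xy.1 i * xy.2 i) = (ℓ : ZMod (p ^ n)) ∧ ¬ P xy.1} :=
      fun q => ⟨(fun i => iota p n (q.1.1 i), q.1.2),
        ⟨q.2, fun hPx => by
          obtain ⟨i, hu⟩ := hPx
          exact iota_not_isUnit hp hn _ hu⟩⟩
    have hGbij : Function.Bijective Gf := by
      constructor
      · rintro ⟨⟨x1, y1⟩, h1⟩ ⟨⟨x2, y2⟩, h2⟩ hq
        have hq' := congrArg Subtype.val hq
        simp only [Gf, Prod.mk.injEq] at hq'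
        refine Subtype.ext (Prod.ext (funext fun i => ?_) hq'.2)
        exact iota_injective hp hn (congrFun hq'.1 i)
      · rintro ⟨⟨x, y⟩, hdot, hnu⟩
        choose b hb using fun i => iota_surj hp hn (x i) (not_exists.mp hnu i)
        refine ⟨⟨(b, y), ?_⟩, Subtype.ext (Prod.ext (funext hb) rfl)⟩
        simp only [hb]
        exact hdot
    have e4 : {xy : (Fin c → ZMod (p ^ n)) × (Fin c → ZMod (p ^ n)) //
          (∑ i, xy.1 i * xy.2 i) = (ℓ : ZMod (p ^ n)) ∧ ¬ P xy.1} ≃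
        {q : (Fin c → ZMod (p ^ (n - 1))) × (Fin c → ZMod (p ^ n)) //
          ∑ i, iota p n (q.1 i) * q.2 i = (ℓ : ZMod (p ^ n))} :=
      (Equiv.ofBijective Gf hGbij).symm
    have e5 : {q : (Fin c → ZMod (p ^ (n - 1))) × (Fin c → ZMod (p ^ n)) //
          ∑ i, iota p n (q.1 i) * q.2 i = (ℓ : ZMod (p ^ n))} ≃
        {q : (Fin c → ZMod (p ^ (n - 1))) × (Fin c → ZMod (p ^ n)) //
          (p : ℤ) ∣ ℓ ∧ ∑ i, q.1 i * pi' p n (q.2 i) = ((ℓ / p : ℤ) : ZMod (p ^ (n - 1)))} :=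
      Equiv.subtypeEquivRight (fun q => cond_iff hp hn ℓ q.1 q.2)
    by_cases hd : (p : ℤ) ∣ ℓ
    · rw [if_pos hd]
      have e6 : {q : (Fin c → ZMod (p ^ (n - 1))) × (Fin c → ZMod (p ^ n)) //
            (p : ℤ) ∣ ℓ ∧ ∑ i, q.1 i * pi' p n (q.2 i) = ((ℓ / p : ℤ) : ZMod (p ^ (n - 1)))} ≃
          {q : (Fin c → ZMod (p ^ (n - 1))) × (Fin c → ZMod (p ^ n)) //
            ∑ i, q.1 i * pi' p n (q.2 i) = ((ℓ / p : ℤ) : ZMod (p ^ (n - 1)))} :=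
        Equiv.subtypeEquivRight (fun q => and_iff_right hd)
      rw [Nat.card_congr (((e4.trans e5).trans e6).trans
        (divisibleEquiv hp hn c ((ℓ / p : ℤ) : ZMod (p ^ (n - 1))))), Nat.card_prod]
      have hKc : Nat.card (Fin c → {k : ZMod (p ^ n) // pi' p n k = 0}) = p ^ c := by
        rw [Nat.card_eq_fintype_card, Fintype.card_fun, ← Nat.card_eq_fintype_card,
          card_K hp hn, Fintype.card_fin]
      rw [hKc, Vcard]
    · rw [if_neg hd]
      rw [Nat.card_congr (e4.trans e5)]
      haveI : IsEmpty {q : (Fin c → ZMod (p ^ (n - 1))) × (Fin c → ZMod (p ^ n)) //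
          (p : ℤ) ∣ ℓ ∧ ∑ i, q.1 i * pi' p n (q.2 i) = ((ℓ / p : ℤ) : ZMod (p ^ (n - 1)))} :=
        ⟨fun q => hd q.2.1⟩
      exact Nat.card_of_isEmpty
  -- assemble
  rw [hsplit, hcard1, hcard2]
  congr 1
  · rw [← pow_mul, ← pow_mul, ← pow_mul, Nat.mul_comm c n, Nat.mul_comm c (n - 1),
      Nat.mul_comm (c - 1) n]
  · split_ifs with h
    · rw [mul_comm]
    · rw [mul_zero]
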